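/- arXiv:1704.08703 — 3 statements merged into one kernel-verified Lean document; each statement's English description precedes it below -/
import Mathlib

section
/- For L ≥ 2 and real numbers J ≠ 0, h, consider on H_L = ⨂_{j=1}^{L} ℂ² the transverse-field Ising Hamiltonian H = −J Σ_{j=1}^{L−1} σᶻ_j σᶻ_{j+1} − h Σ_{j=1}^{L} σˣ_j and the operator Φ = Σ_{j=1}^{L} (h/J)^{j−1} γ_j^A, where γ_j^A = (Π_{k=1}^{j−1} σˣ_k) σᶻ_j and γ_j^B = (Π_{k=1}^{j−1} σˣ_k) σʸ_j. Then (i) [H, Φ] = 2 i h (h/J)^{L−1} γ_L^B, and (ii) Φ² = (Σ_{j=1}^{L} (h/J)^{2(j−1)}) · Id. In particular Φ commutes with H up to a single term whose operator norm is 2|h|·|h/J|^{L−1}. -/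
/-!
STATEMENT 5: For the transverse-field Ising chain H = −J Σ_{j=1}^{L−1} σᶻ_j σᶻ_{j+1} − h Σ_j σˣ_j
and Φ = Σ_{j=1}^{L} (h/J)^{j−1} γ_j^A one has [H, Φ] = 2ih(h/J)^{L−1} γ_L^B and
Φ² = (Σ_{j=1}^{L} (h/J)^{2(j−1)})·Id.  Sites are 0-based here (paper site j ↔ index j−1).
-/

noncomputable section

open Matrix Complex

/-- Pauli X matrix. -/
def sigmaX : Matrix (Fin 2) (Fin 2) ℂ := !![0, 1; 1, 0]

/-- Pauli Y matrix. -/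
def sigmaY : Matrix (Fin 2) (Fin 2) ℂ := !![0, -Complex.I; Complex.I, 0]

/-- Pauli Z matrix. -/
def sigmaZ : Matrix (Fin 2) (Fin 2) ℂ := !![1, 0; 0, -1]

/-- The operator on ⨂_{k=0}^{L-1} ℂ² acting as the 2×2 matrix `A` on the j-th tensor
factor and as the identity on all the others (matrix entries of a tensor product). -/
def siteOp (L : ℕ) (j : ℕ) (A : Matrix (Fin 2) (Fin 2) ℂ) :
    Matrix (Fin L → Fin 2) (Fin L → Fin 2) ℂ :=
  fun s t => ∏ k : Fin L, if (k : ℕ) = j then A (s k) (t k) else (if s k = t k then 1 else 0)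

/-- σˣ_j -/
def PX (L j : ℕ) : Matrix (Fin L → Fin 2) (Fin L → Fin 2) ℂ := siteOp L j sigmaX
/-- σʸ_j -/
def PY (L j : ℕ) : Matrix (Fin L → Fin 2) (Fin L → Fin 2) ℂ := siteOp L j sigmaY
/-- σᶻ_j -/
def PZ (L j : ℕ) : Matrix (Fin L → Fin 2) (Fin L → Fin 2) ℂ := siteOp L j sigmaZ

/-- The Jordan–Wigner string Π_{k<j} σˣ_k. -/
def jwString (L j : ℕ) : Matrix (Fin L → Fin 2) (Fin L → Fin 2) ℂ :=
  ((List.range j).map (PX L)).prod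

/-- Majorana operator γ_j^A = (Π_{k<j} σˣ_k) σᶻ_j (0-based site index). -/
def gammaA (L j : ℕ) : Matrix (Fin L → Fin 2) (Fin L → Fin 2) ℂ := jwString L j * PZ L j

/-- Majorana operator γ_j^B = (Π_{k<j} σˣ_k) σʸ_j (0-based site index). -/
def gammaB (L j : ℕ) : Matrix (Fin L → Fin 2) (Fin L → Fin 2) ℂ := jwString L j * PY L j


def mop (L : ℕ) (f : ℕ → Matrix (Fin 2) (Fin 2) ℂ) :
    Matrix (Fin L → Fin 2) (Fin L → Fin 2) ℂ :=
  fun s t => ∏ k : Fin L, f k (s k) (t k)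

lemma mop_mul (L : ℕ) (f g : ℕ → Matrix (Fin 2) (Fin 2) ℂ) :
    mop L f * mop L g = mop L (fun k => f k * g k) := by
  ext s t
  simp only [mop, Matrix.mul_apply]
  rw [Fintype.prod_sum (fun (k : Fin L) (x : Fin 2) => f (k : ℕ) (s k) x * g (k : ℕ) x (t k))]
  exact Finset.sum_congr rfl fun u _ => (Finset.prod_mul_distrib).symm

lemma mop_congr (L : ℕ) (f g : ℕ → Matrix (Fin 2) (Fin 2) ℂ)
    (hfg : ∀ k, k < L → f k = g k) : mop L f = mop L g := by
  ext s t
  exact Finset.prod_congr rfl fun k _ => by rw [hfg k k.isLt]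

lemma mop_one (L : ℕ) : mop L (fun _ => 1) = 1 := by
  ext s t
  simp only [mop, Matrix.one_apply]
  by_cases hst : s = t
  · subst hst; simp
  · rw [if_neg hst]
    obtain ⟨k, hk⟩ := Function.ne_iff.mp hst
    exact Finset.prod_eq_zero (Finset.mem_univ k) (by simp [Matrix.one_apply, hk])

lemma mop_smul (L : ℕ) (c : ℕ → ℂ) (f g : ℕ → Matrix (Fin 2) (Fin 2) ℂ)
    (hfg : ∀ k, k < L → f k = c k • g k) :
    mop L f = (∏ k ∈ Finset.range L, c k) • mop L g := by
  ext s t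
  simp only [mop, Matrix.smul_apply, smul_eq_mul]
  rw [← Fin.prod_univ_eq_prod_range, ← Finset.prod_mul_distrib]
  exact Finset.prod_congr rfl fun k _ => by
    rw [hfg k k.isLt]; simp

lemma siteOp_eq (L j : ℕ) (A : Matrix (Fin 2) (Fin 2) ℂ) :
    siteOp L j A = mop L (fun k => if k = j then A else 1) := by
  ext s t
  refine Finset.prod_congr rfl fun k _ => ?_
  by_cases hk : (k : ℕ) = j
  · simp [hk]
  · simp [hk, Matrix.one_apply]

-- Pauli algebra
lemma XX : sigmaX * sigmaX = 1 := by
  ext i j; fin_cases i <;> fin_cases j <;>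
    simp [sigmaX, Matrix.mul_apply, Fin.sum_univ_two, Matrix.one_apply]
lemma ZZid : sigmaZ * sigmaZ = 1 := by
  ext i j; fin_cases i <;> fin_cases j <;>
    simp [sigmaZ, Matrix.mul_apply, Fin.sum_univ_two, Matrix.one_apply]
lemma ZX : sigmaZ * sigmaX = Complex.I • sigmaY := by
  ext i j; fin_cases i <;> fin_cases j <;>
    simp [sigmaZ, sigmaX, sigmaY, Matrix.mul_apply, Fin.sum_univ_two, Complex.I_mul_I]
lemma XZ : sigmaX * sigmaZ = (-Complex.I) • sigmaY := by
  ext i j; fin_cases i <;> fin_cases j <;>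
    simp [sigmaZ, sigmaX, sigmaY, Matrix.mul_apply, Fin.sum_univ_two, Complex.I_mul_I]
lemma ZX_neg_XZ : sigmaZ * sigmaX = (-1 : ℂ) • (sigmaX * sigmaZ) := by
  rw [ZX, XZ, smul_smul]; norm_num
lemma XZ_neg_ZX : sigmaX * sigmaZ = (-1 : ℂ) • (sigmaZ * sigmaX) := by
  rw [ZX, XZ, smul_smul]; norm_num

def aF (j : ℕ) : ℕ → Matrix (Fin 2) (Fin 2) ℂ :=
  fun k => if k < j then sigmaX else if k = j then sigmaZ else 1
def bF (j : ℕ) : ℕ → Matrix (Fin 2) (Fin 2) ℂ :=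
  fun k => if k < j then sigmaX else if k = j then sigmaY else 1

lemma jwString_eq (L j : ℕ) :
    jwString L j = mop L (fun k => if k < j then sigmaX else 1) := by
  induction j with
  | zero =>
      simp only [jwString, List.range_zero, List.map_nil, List.prod_nil]
      rw [show (fun k => if k < 0 then sigmaX else (1 : Matrix (Fin 2) (Fin 2) ℂ))
            = fun _ => 1 from funext fun k => by simp, mop_one]
  | succ j ih =>
      rw [jwString, List.range_succ, List.map_append, List.prod_append,
        List.map_singleton, List.prod_singleton, ← jwString, ih, PX, siteOp_eq, mop_mul]
      refine mop_congr _ _ _ fun k _ => ?_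
      rcases lt_trichotomy k j with hk | hk | hk
      · simp [hk, Nat.lt_succ_of_lt hk, hk.ne]
      · simp [hk, Nat.lt_irrefl]
      · rw [if_neg (by omega), if_neg (by omega), if_neg (by omega), mul_one]

lemma gammaA_eq (L j : ℕ) : gammaA L j = mop L (aF j) := by
  rw [gammaA, jwString_eq, PZ, siteOp_eq, mop_mul]
  refine mop_congr _ _ _ fun k _ => ?_
  rcases lt_trichotomy k j with hk | hk | hk
  · simp [aF, hk, hk.ne]
  · simp [aF, hk, Nat.lt_irrefl]
  · simp [aF, Nat.lt_asymm hk, hk.ne']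

lemma gammaB_eq (L j : ℕ) : gammaB L j = mop L (bF j) := by
  rw [gammaB, jwString_eq, PY, siteOp_eq, mop_mul]
  refine mop_congr _ _ _ fun k _ => ?_
  rcases lt_trichotomy k j with hk | hk | hk
  · simp [bF, hk, hk.ne]
  · simp [bF, hk, Nat.lt_irrefl]
  · simp [bF, Nat.lt_asymm hk, hk.ne']

lemma prod_ind (L j : ℕ) (hj : j < L) (c : ℂ) :
    (∏ k ∈ Finset.range L, (if k = j then c else 1)) = c := by
  rw [Finset.prod_ite_eq' (Finset.range L) j (fun _ => c),
    if_pos (Finset.mem_range.mpr hj)]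

lemma prod_ind' (L j : ℕ) (hj : j < L) (P : Prop) [Decidable P] (c : ℂ) :
    (∏ k ∈ Finset.range L, (if k = j ∧ P then c else 1)) = if P then c else 1 := by
  by_cases hP : P
  · simp only [hP, and_true, if_true]
    exact prod_ind L j hj c
  · simp [hP]

lemma comm_zz (L j m : ℕ) (hj : j + 1 < L) (hm : m < L) :
    PZ L j * PZ L (j + 1) * gammaA L m - gammaA L m * (PZ L j * PZ L (j + 1))
      = if m = j + 1 then (2 * Complex.I) • gammaB L j else 0 := by
  rw [PZ, PZ, siteOp_eq, siteOp_eq, gammaA_eq, mop_mul, mop_mul, mop_mul]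
  by_cases hmj : m = j + 1
  · subst hmj
    rw [if_pos rfl, gammaB_eq]
    have h1 : mop L (fun k => ((if k = j then sigmaZ else 1) * if k = j + 1 then sigmaZ else 1)
          * aF (j + 1) k) = Complex.I • mop L (bF j) := by
      have hpt : ∀ k, k < L →
          ((if k = j then sigmaZ else 1) * if k = j + 1 then sigmaZ else 1) * aF (j + 1) k
            = (if k = j then Complex.I else 1) • bF j k := by
        intro k _
        rcases Nat.lt_trichotomy k j with h0 | h0 | h0
        · simp [aF, bF, show k ≠ j by omega, show k ≠ j + 1 by omega, h0,
            show k < j + 1 by omega]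
        · subst h0
          simp [aF, bF, show k ≠ k + 1 by omega, ZX]
        · by_cases h1 : k = j + 1
          · subst h1
            simp [aF, bF, show j + 1 ≠ j by omega, show ¬ (j + 1 < j + 1) by omega,
              show ¬ (j + 1 < j) by omega, ZZid]
          · simp [aF, bF, show k ≠ j by omega, h1, show ¬ k < j + 1 by omega,
              show ¬ k < j by omega]
      rw [mop_smul L _ _ _ hpt, prod_ind L j (by omega)]
    have h2 : mop L (fun k => aF (j + 1) k *
          ((if k = j then sigmaZ else 1) * if k = j + 1 then sigmaZ else 1))
          = (-Complex.I) • mop L (bF j) := by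
      have hpt : ∀ k, k < L →
          aF (j + 1) k * ((if k = j then sigmaZ else 1) * if k = j + 1 then sigmaZ else 1)
            = (if k = j then -Complex.I else 1) • bF j k := by
        intro k _
        rcases Nat.lt_trichotomy k j with h0 | h0 | h0
        · simp [aF, bF, show k ≠ j by omega, show k ≠ j + 1 by omega, h0,
            show k < j + 1 by omega]
        · subst h0
          simp [aF, bF, show k ≠ k + 1 by omega, XZ]
        · by_cases h1 : k = j + 1
          · subst h1
            simp [aF, bF, show j + 1 ≠ j by omega, show ¬ (j + 1 < j + 1) by omega,
              show ¬ (j + 1 < j) by omega, ZZid]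
          · simp [aF, bF, show k ≠ j by omega, h1, show ¬ k < j + 1 by omega,
              show ¬ k < j by omega]
      rw [mop_smul L _ _ _ hpt, prod_ind L j (by omega)]
    rw [h1, h2, ← sub_smul]
    congr 1
    ring
  · rw [if_neg hmj, sub_eq_zero]
    have hpt : ∀ k, k < L →
        ((if k = j then sigmaZ else 1) * if k = j + 1 then sigmaZ else 1) * aF m k
          = ((if k = j ∧ j < m then (-1 : ℂ) else 1) * (if k = j + 1 ∧ j + 1 < m then (-1 : ℂ) else 1))
            • (aF m k * ((if k = j then sigmaZ else 1) * if k = j + 1 then sigmaZ else 1)) := by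
      intro k _
      rcases Nat.lt_trichotomy k j with h0 | h0 | h0
      · simp [show k ≠ j by omega, show k ≠ j + 1 by omega]
      · rcases Nat.lt_trichotomy j m with h1 | h1 | h1
        · simp only [aF, if_pos h0, if_neg (show k ≠ j + 1 by omega), mul_one,
            if_pos (show k < m by omega), if_pos (⟨h0, h1⟩ : k = j ∧ j < m),
            if_neg (show ¬ (k = j + 1 ∧ j + 1 < m) by omega), one_mul, mul_one]
          rw [ZX, XZ]
          module
        · simp [aF, h0, show ¬ j < m by omega, h1, show ¬ (k = j + 1) by omega,
            show ¬ (j < m) by omega, show ¬ (j + 1 < m) by omega]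
        · simp [aF, h0, show ¬ j < m by omega, show j ≠ m by omega,
            show ¬ (k = j + 1) by omega, show ¬ (j + 1 < m) by omega]
      · by_cases h1 : k = j + 1
        · rcases Nat.lt_trichotomy (j + 1) m with h2 | h2 | h2
          · simp only [aF, if_neg (show k ≠ j by omega), if_pos h1, one_mul,
              if_pos (show k < m by omega), if_neg (show ¬ (k = j ∧ j < m) by omega),
              if_pos (⟨h1, h2⟩ : k = j + 1 ∧ j + 1 < m), mul_one]
            rw [ZX, XZ]
            module
          · exact absurd h2 (by omega)
          · simp [aF, h1, show ¬ k < m by omega, show k ≠ m by omega,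
              show k ≠ j by omega, show ¬ (j < m) by omega, show ¬ (j + 1 < m) by omega]
        · simp [show k ≠ j by omega, h1]
    rw [mop_smul L _ _ _ hpt, Finset.prod_mul_distrib, prod_ind' L j (by omega),
      prod_ind' L (j + 1) (by omega)]
    have : j < m ↔ j + 1 < m := by omega
    by_cases hjm : j < m
    · rw [if_pos hjm, if_pos (this.mp hjm)]
      norm_num
    · rw [if_neg hjm, if_neg (fun hc => hjm (this.mpr hc))]
      norm_num

lemma comm_x (L j m : ℕ) (hj : j < L) (hm : m < L) :
    PX L j * gammaA L m - gammaA L m * PX L j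
      = if m = j then (-(2 * Complex.I)) • gammaB L j else 0 := by
  rw [PX, siteOp_eq, gammaA_eq, mop_mul, mop_mul]
  by_cases hmj : m = j
  · subst hmj
    rw [if_pos rfl, gammaB_eq]
    have h1 : mop L (fun k => (if k = m then sigmaX else 1) * aF m k)
        = (-Complex.I) • mop L (bF m) := by
      have hpt : ∀ k, k < L → (if k = m then sigmaX else 1) * aF m k
          = (if k = m then -Complex.I else 1) • bF m k := by
        intro k _
        rcases Nat.lt_trichotomy k m with h0 | h0 | h0
        · simp [aF, bF, show k ≠ m by omega, h0]
        · subst h0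
          simp [aF, bF, show ¬ k < k by omega, XZ]
        · simp [aF, bF, show k ≠ m by omega, show ¬ k < m by omega]
      rw [mop_smul L _ _ _ hpt, prod_ind L m hm]
    have h2 : mop L (fun k => aF m k * (if k = m then sigmaX else 1))
        = Complex.I • mop L (bF m) := by
      have hpt : ∀ k, k < L → aF m k * (if k = m then sigmaX else 1)
          = (if k = m then Complex.I else 1) • bF m k := by
        intro k _
        rcases Nat.lt_trichotomy k m with h0 | h0 | h0
        · simp [aF, bF, show k ≠ m by omega, h0]
        · subst h0
          simp [aF, bF, show ¬ k < k by omega, ZX]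
        · simp [aF, bF, show k ≠ m by omega, show ¬ k < m by omega]
      rw [mop_smul L _ _ _ hpt, prod_ind L m hm]
    rw [h1, h2, ← sub_smul]
    congr 1
    ring
  · rw [if_neg hmj, sub_eq_zero]
    refine mop_congr _ _ _ fun k _ => ?_
    by_cases h0 : k = j
    · subst h0
      by_cases h1 : k < m
      · simp [aF, h1]
      · simp [aF, h1, show k ≠ m from fun hc => hmj hc.symm]
    · simp [h0]

lemma gammaA_sq (L m : ℕ) : gammaA L m * gammaA L m = 1 := by
  rw [gammaA_eq, mop_mul]
  have hpt : ∀ k, k < L → aF m k * aF m k = (fun _ => (1 : Matrix (Fin 2) (Fin 2) ℂ)) k := by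
    intro k _
    rcases Nat.lt_trichotomy k m with h0 | h0 | h0
    · simp [aF, h0, XX]
    · simp [aF, h0, show ¬ m < m by omega, ZZid]
    · simp [aF, show ¬ k < m by omega, show k ≠ m by omega]
  rw [mop_congr L _ _ hpt, mop_one]

lemma gammaA_anti (L m n : ℕ) (hm : m < L) (hmn : m < n) :
    gammaA L m * gammaA L n = (-1 : ℂ) • (gammaA L n * gammaA L m) := by
  rw [gammaA_eq, gammaA_eq, mop_mul, mop_mul]
  have hpt : ∀ k, k < L →
      aF m k * aF n k = (if k = m then (-1 : ℂ) else 1) • (aF n k * aF m k) := by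
    intro k _
    rcases Nat.lt_trichotomy k m with h0 | h0 | h0
    · simp [aF, h0, show k < n by omega, show k ≠ m by omega]
    · simp only [aF, if_neg (show ¬ k < m by omega), if_pos h0,
        if_pos (show k < n by omega)]
      rw [ZX, XZ]
      module
    · simp [aF, show ¬ k < m by omega, show k ≠ m by omega]
  rw [mop_smul L _ _ _ hpt, prod_ind L m hm]

theorem statement_5 (L : ℕ) (hL : 2 ≤ L) (J h : ℝ) (hJ : J ≠ 0)
    (H Φ : Matrix (Fin L → Fin 2) (Fin L → Fin 2) ℂ)
    (hH : H = -(J : ℂ) • (∑ j ∈ Finset.range (L - 1), PZ L j * PZ L (j + 1))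
            - (h : ℂ) • (∑ j ∈ Finset.range L, PX L j))
    (hΦ : Φ = ∑ j ∈ Finset.range L, ((h : ℂ) / (J : ℂ)) ^ j • gammaA L j) :
    H * Φ - Φ * H
      = (2 * Complex.I * (h : ℂ) * ((h : ℂ) / (J : ℂ)) ^ (L - 1)) • gammaB L (L - 1) ∧
    Φ * Φ = (∑ j ∈ Finset.range L, ((h : ℂ) / (J : ℂ)) ^ (2 * j))
              • (1 : Matrix (Fin L → Fin 2) (Fin L → Fin 2) ℂ) := by
  have hJC : (J : ℂ) ≠ 0 := by exact_mod_cast hJ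
  set q : ℂ := (h : ℂ) / (J : ℂ) with hqdef
  constructor
  · -- commutator part
    have hA : (∑ j ∈ Finset.range (L - 1), PZ L j * PZ L (j + 1)) * Φ
          - Φ * (∑ j ∈ Finset.range (L - 1), PZ L j * PZ L (j + 1))
        = ∑ j ∈ Finset.range (L - 1), (2 * Complex.I * q ^ (j + 1)) • gammaB L j := by
      rw [hΦ]
      simp only [Finset.sum_mul, Finset.mul_sum]
      rw [Finset.sum_comm (s := Finset.range L) (t := Finset.range (L - 1))
        (f := fun x i => PZ L i * PZ L (i + 1) * q ^ x • gammaA L x)]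
      rw [← Finset.sum_sub_distrib]
      refine Finset.sum_congr rfl fun j hj => ?_
      have hj' : j + 1 < L := by
        have := Finset.mem_range.mp hj; omega
      rw [← Finset.sum_sub_distrib]
      have hin : ∀ m ∈ Finset.range L,
          PZ L j * PZ L (j + 1) * (q ^ m • gammaA L m)
            - q ^ m • gammaA L m * (PZ L j * PZ L (j + 1))
          = if m = j + 1 then q ^ m • ((2 * Complex.I) • gammaB L j) else 0 := by
        intro m hm
        rw [mul_smul_comm, smul_mul_assoc, ← smul_sub,
          comm_zz L j m hj' (Finset.mem_range.mp hm)]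
        split_ifs with hc
        · rfl
        · exact smul_zero _
      rw [Finset.sum_congr rfl hin, Finset.sum_ite_eq' (Finset.range L) (j + 1),
        if_pos (Finset.mem_range.mpr hj'), smul_smul]
      congr 1
      ring
    have hB : (∑ j ∈ Finset.range L, PX L j) * Φ - Φ * (∑ j ∈ Finset.range L, PX L j)
        = ∑ m ∈ Finset.range L, (-(2 * Complex.I) * q ^ m) • gammaB L m := by
      rw [hΦ]
      simp only [Finset.sum_mul, Finset.mul_sum]
      rw [Finset.sum_comm (s := Finset.range L) (t := Finset.range L)
        (f := fun x i => PX L i * q ^ x • gammaA L x)]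
      rw [← Finset.sum_sub_distrib]
      refine Finset.sum_congr rfl fun j hj => ?_
      have hj' : j < L := Finset.mem_range.mp hj
      rw [← Finset.sum_sub_distrib]
      have hin : ∀ m ∈ Finset.range L,
          PX L j * (q ^ m • gammaA L m) - q ^ m • gammaA L m * PX L j
          = if m = j then q ^ m • ((-(2 * Complex.I)) • gammaB L j) else 0 := by
        intro m hm
        rw [mul_smul_comm, smul_mul_assoc, ← smul_sub,
          comm_x L j m hj' (Finset.mem_range.mp hm)]
        split_ifs with hc
        · rfl
        · exact smul_zero _
      rw [Finset.sum_congr rfl hin, Finset.sum_ite_eq' (Finset.range L) j,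
        if_pos (Finset.mem_range.mpr hj'), smul_smul]
      congr 1
      ring
    have expand : H * Φ - Φ * H
        = (-(J : ℂ)) • ((∑ j ∈ Finset.range (L - 1), PZ L j * PZ L (j + 1)) * Φ
              - Φ * (∑ j ∈ Finset.range (L - 1), PZ L j * PZ L (j + 1)))
          - (h : ℂ) • ((∑ j ∈ Finset.range L, PX L j) * Φ
              - Φ * (∑ j ∈ Finset.range L, PX L j)) := by
      rw [hH]
      simp only [sub_mul, mul_sub, smul_mul_assoc, mul_smul_comm]
      module
    rw [expand, hA, hB]
    obtain ⟨M, rfl⟩ : ∃ M, L = M + 1 := ⟨L - 1, by omega⟩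
    simp only [Nat.add_sub_cancel]
    rw [Finset.sum_range_succ, smul_add, Finset.smul_sum, Finset.smul_sum,
      sub_add_eq_sub_sub, ← Finset.sum_sub_distrib]
    have hz : ∀ j ∈ Finset.range M,
        (-(J : ℂ)) • ((2 * Complex.I * q ^ (j + 1)) • gammaB (M + 1) j)
          - (h : ℂ) • ((-(2 * Complex.I) * q ^ j) • gammaB (M + 1) j)
        = 0 := by
      intro j _
      rw [smul_smul, smul_smul, ← sub_smul]
      convert zero_smul ℂ (gammaB (M + 1) j) using 2
      rw [pow_succ, hqdef]
      field_simp
      ring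
    rw [Finset.sum_congr rfl hz, Finset.sum_const, smul_zero, zero_sub,
      smul_smul, ← neg_smul]
    congr 1
    ring
  · -- square part
    rw [hΦ, Finset.sum_mul_sum]
    have key : ∀ m ∈ Finset.range L, ∀ n ∈ Finset.range L,
        q ^ m • gammaA L m * (q ^ n • gammaA L n)
          + q ^ n • gammaA L n * (q ^ m • gammaA L m)
          = if n = m then (2 * q ^ (2 * m)) • (1 : Matrix (Fin L → Fin 2) (Fin L → Fin 2) ℂ)
            else 0 := by
      intro m hm n hn
      by_cases hnm : n = m
      · subst hnm
        rw [if_pos rfl, smul_mul_assoc, mul_smul_comm, smul_smul, gammaA_sq, ← add_smul]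
        congr 1
        ring
      · rw [if_neg hnm, smul_mul_assoc, mul_smul_comm, smul_smul,
          smul_mul_assoc, mul_smul_comm, smul_smul]
        rcases Nat.lt_trichotomy m n with hlt | heq | hgt
        · rw [gammaA_anti L m n (Finset.mem_range.mp hm) hlt]
          module
        · exact absurd heq.symm hnm
        · rw [gammaA_anti L n m (Finset.mem_range.mp hn) hgt]
          module
    refine smul_right_injective _ (two_ne_zero (α := ℂ)) ?_
    show (2 : ℂ) • _ = (2 : ℂ) • _
    rw [two_smul ℂ, two_smul ℂ]
    nth_rewrite 2 [Finset.sum_comm]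
    rw [← Finset.sum_add_distrib]
    calc ∑ m ∈ Finset.range L, (∑ n ∈ Finset.range L,
            q ^ m • gammaA L m * (q ^ n • gammaA L n)
          + ∑ n ∈ Finset.range L, q ^ n • gammaA L n * (q ^ m • gammaA L m))
        = ∑ m ∈ Finset.range L, ∑ n ∈ Finset.range L,
            (q ^ m • gammaA L m * (q ^ n • gammaA L n)
              + q ^ n • gammaA L n * (q ^ m • gammaA L m)) := by
          exact Finset.sum_congr rfl fun m _ => (Finset.sum_add_distrib).symm
      _ = ∑ m ∈ Finset.range L,
            (2 * q ^ (2 * m)) • (1 : Matrix (Fin L → Fin 2) (Fin L → Fin 2) ℂ) := by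
          refine Finset.sum_congr rfl fun m hm => ?_
          rw [Finset.sum_congr rfl (fun n hn => key m hm n hn),
            Finset.sum_ite_eq' (Finset.range L) m, if_pos hm]
      _ = (∑ j ∈ Finset.range L, q ^ (2 * j))
            • (1 : Matrix (Fin L → Fin 2) (Fin L → Fin 2) ℂ)
          + (∑ j ∈ Finset.range L, q ^ (2 * j))
            • (1 : Matrix (Fin L → Fin 2) (Fin L → Fin 2) ℂ) := by
          rw [← add_smul, ← Finset.sum_add_distrib, Finset.sum_smul]
          exact Finset.sum_congr rfl fun m _ => by congr 1; ring

end
end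

section
/- Let R be an associative unital ℂ-algebra containing elements a_j, b_j for j ∈ ℤ/L (L ≥ 1) satisfying the Majorana relations a_j a_k + a_k a_j = 2δ_{jk}·1, b_j b_k + b_k b_j = 2δ_{jk}·1, and a_j b_k + b_k a_j = 0 for all j, k ∈ ℤ/L. Define G_n = (1/4) Σ_{j∈ℤ/L} (a_j a_{j+n} − b_j b_{j+n}) and A_m = −i Σ_{j∈ℤ/L} b_j a_{j+1−m}. Then for all n, m ∈ ℤ/L the Onsager algebra relations hold: [G_n, G_m] = 0, [G_n, A_m] = A_{m+n} − A_{m−n}, and [A_n, A_m] = 8 G_{n−m}. -/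
open Finset

private lemma key_comm {R : Type*} [Ring R] (A B C D : R) :
    A*B*(C*D) - C*D*(A*B) =
      A*(B*C+C*B)*D - A*C*(B*D+D*B) + (A*C+C*A)*(D*B) - C*(A*D+D*A)*B := by
  noncomm_ring

private lemma comm_sum {R ι : Type*} [Ring R] [Fintype ι] (x y z w : ι → R) :
    (∑ j, x j * y j) * (∑ k, z k * w k) - (∑ k, z k * w k) * (∑ j, x j * y j)
      = ∑ j, ∑ k, (x j * (y j * z k + z k * y j) * w k
          - x j * z k * (y j * w k + w k * y j)
          + (x j * z k + z k * x j) * (w k * y j)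
          - z k * (x j * w k + w k * x j) * y j) := by
  rw [Finset.sum_mul_sum, Finset.sum_mul_sum]
  rw [Finset.sum_comm (s := univ) (t := univ) (f := fun k j => (z k * w k) * (x j * y j))]
  rw [← Finset.sum_sub_distrib]
  refine Finset.sum_congr rfl fun j _ => ?_
  rw [← Finset.sum_sub_distrib]
  exact Finset.sum_congr rfl fun k _ => key_comm _ _ _ _

/-!
STATEMENT 11: In any associative unital ℂ-algebra containing Majorana elements
a_j, b_j (j ∈ ℤ/L) with a_j a_k + a_k a_j = 2δ_{jk}, b_j b_k + b_k b_j = 2δ_{jk},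
a_j b_k + b_k a_j = 0, the bilinears G_n = (1/4)Σ_j (a_j a_{j+n} − b_j b_{j+n}) and
A_m = −i Σ_j b_j a_{j+1−m} satisfy the Onsager algebra relations
[G_n, G_m] = 0, [G_n, A_m] = A_{m+n} − A_{m−n}, [A_n, A_m] = 8 G_{n−m}.
-/

theorem statement_11 (L : ℕ) [NeZero L] (hL : 1 ≤ L)
    (R : Type*) [Ring R] [Algebra ℂ R]
    (a b : ZMod L → R)
    (ha : ∀ j k : ZMod L, a j * a k + a k * a j = if j = k then 2 else 0)
    (hb : ∀ j k : ZMod L, b j * b k + b k * b j = if j = k then 2 else 0)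
    (hab : ∀ j k : ZMod L, a j * b k + b k * a j = 0)
    (G A : ZMod L → R)
    (hG : ∀ n : ZMod L, G n = (4 : ℂ)⁻¹ • ∑ j : ZMod L, (a j * a (j + n) - b j * b (j + n)))
    (hA : ∀ m : ZMod L, A m = (-Complex.I) • ∑ j : ZMod L, b j * a (j + 1 - m)) :
    ∀ n m : ZMod L,
      (G n * G m - G m * G n = 0) ∧
      (G n * A m - A m * G n = A (m + n) - A (m - n)) ∧
      (A n * A m - A m * A n = (8 : ℂ) • G (n - m)) := by
  have hba : ∀ j k : ZMod L, b j * a k + a k * b j = 0 := fun j k => by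
    rw [add_comm]; exact hab k j
  have htwo : ∀ X : R, X * 2 = (2:ℂ) • X := fun X => by
    rw [mul_two, two_smul]
  -- [Sa n, Sa m] = 0
  have hSaSa : ∀ n m : ZMod L,
      (∑ j : ZMod L, a j * a (j+n)) * (∑ j : ZMod L, a j * a (j+m))
        - (∑ j : ZMod L, a j * a (j+m)) * (∑ j : ZMod L, a j * a (j+n)) = 0 := by
    intro n m
    rw [comm_sum (fun j => a j) (fun j => a (j+n)) (fun k => a k) (fun k => a (k+m))]
    simp only [ha]
    simp only [← sub_eq_iff_eq_add]
    simp only [mul_ite, ite_mul, mul_zero, zero_mul]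
    simp only [Finset.sum_add_distrib, Finset.sum_sub_distrib, Finset.sum_ite_eq,
      Finset.mem_univ, if_true]
    simp only [show ∀ r s : R, r * 2 * s = (r*s)*2 from fun r s => by noncomm_ring,
      show ∀ r s : R, 2*(r*s) = (r*s)*2 from fun r s => by noncomm_ring]
    rw [show (∑ x : ZMod L, (a (x + m) * a (x + n))*2) = ∑ x : ZMod L, (a x * a (x + n - m))*2 from
      Fintype.sum_equiv (Equiv.addRight m) _ _
        (fun x => by show _ = a (x+m) * a (x + m + n - m) * 2
                     rw [show x + m + n - m = x + n from by ring]),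
      show (∑ x : ZMod L, (a (x - m) * a (x + n))*2) = ∑ x : ZMod L, (a x * a (x + n + m))*2 from
      Fintype.sum_equiv (Equiv.subRight m) _ _
        (fun x => by show _ = a (x-m) * a (x - m + n + m) * 2
                     rw [show x - m + n + m = x + n from by ring])]
    abel
  -- [Sb n, Sb m] = 0
  have hSbSb : ∀ n m : ZMod L,
      (∑ j : ZMod L, b j * b (j+n)) * (∑ j : ZMod L, b j * b (j+m))
        - (∑ j : ZMod L, b j * b (j+m)) * (∑ j : ZMod L, b j * b (j+n)) = 0 := by
    intro n m
    rw [comm_sum (fun j => b j) (fun j => b (j+n)) (fun k => b k) (fun k => b (k+m))]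
    simp only [hb]
    simp only [← sub_eq_iff_eq_add]
    simp only [mul_ite, ite_mul, mul_zero, zero_mul]
    simp only [Finset.sum_add_distrib, Finset.sum_sub_distrib, Finset.sum_ite_eq,
      Finset.mem_univ, if_true]
    simp only [show ∀ r s : R, r * 2 * s = (r*s)*2 from fun r s => by noncomm_ring,
      show ∀ r s : R, 2*(r*s) = (r*s)*2 from fun r s => by noncomm_ring]
    rw [show (∑ x : ZMod L, (b (x + m) * b (x + n))*2) = ∑ x : ZMod L, (b x * b (x + n - m))*2 from
      Fintype.sum_equiv (Equiv.addRight m) _ _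
        (fun x => by show _ = b (x+m) * b (x + m + n - m) * 2
                     rw [show x + m + n - m = x + n from by ring]),
      show (∑ x : ZMod L, (b (x - m) * b (x + n))*2) = ∑ x : ZMod L, (b x * b (x + n + m))*2 from
      Fintype.sum_equiv (Equiv.subRight m) _ _
        (fun x => by show _ = b (x-m) * b (x - m + n + m) * 2
                     rw [show x - m + n + m = x + n from by ring])]
    abel
  -- mixed: [Sa n, Sb m] = 0 and [Sb n, Sa m] = 0
  have hSaSb : ∀ n m : ZMod L,
      (∑ j : ZMod L, a j * a (j+n)) * (∑ j : ZMod L, b j * b (j+m))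
        - (∑ j : ZMod L, b j * b (j+m)) * (∑ j : ZMod L, a j * a (j+n)) = 0 := by
    intro n m
    rw [comm_sum (fun j => a j) (fun j => a (j+n)) (fun k => b k) (fun k => b (k+m))]
    simp only [hab, hba, mul_zero, zero_mul, sub_zero, zero_sub, add_zero, zero_add,
      neg_zero, sub_self, Finset.sum_const_zero]
  have hSbSa : ∀ n m : ZMod L,
      (∑ j : ZMod L, b j * b (j+n)) * (∑ j : ZMod L, a j * a (j+m))
        - (∑ j : ZMod L, a j * a (j+m)) * (∑ j : ZMod L, b j * b (j+n)) = 0 := by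
    intro n m
    rw [comm_sum (fun j => b j) (fun j => b (j+n)) (fun k => a k) (fun k => a (k+m))]
    simp only [hab, hba, mul_zero, zero_mul, sub_zero, zero_sub, add_zero, zero_add,
      neg_zero, sub_self, Finset.sum_const_zero]
  -- [Sa n, T m] = 2 T(m+n) - 2 T(m-n)
  have hSaT : ∀ n m : ZMod L,
      (∑ j : ZMod L, a j * a (j+n)) * (∑ j : ZMod L, b j * a (j+1-m))
        - (∑ j : ZMod L, b j * a (j+1-m)) * (∑ j : ZMod L, a j * a (j+n))
        = (∑ j : ZMod L, b j * a (j+1-(m+n)))*2 - (∑ j : ZMod L, b j * a (j+1-(m-n)))*2 := by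
    intro n m
    rw [comm_sum (fun j => a j) (fun j => a (j+n)) (fun k => b k) (fun k => a (k+1-m))]
    simp only [ha, hb, hab, hba]
    simp only [eq_sub_iff_add_eq, ← sub_eq_iff_eq_add]
    simp only [mul_ite, ite_mul, mul_zero, zero_mul]
    simp only [Finset.sum_add_distrib, Finset.sum_sub_distrib, Finset.sum_ite_eq,
      Finset.mem_univ, if_true, Finset.sum_const_zero, zero_sub, add_zero, zero_add, sub_zero,
      Finset.sum_neg_distrib, neg_neg]
    simp only [show ∀ (j k : ZMod L), a j * b k = -(b k * a j) from
        fun j k => eq_neg_of_add_eq_zero_left (hab j k), neg_mul, neg_neg]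
    simp only [show ∀ r s : R, r * 2 * s = (r*s)*2 from fun r s => by noncomm_ring]
    simp only [Finset.sum_neg_distrib, neg_neg]
    rw [show (∑ x : ZMod L, b (x + n + m - 1) * a x * 2)
          = ∑ x : ZMod L, b x * a (x + 1 - (m + n)) * 2 from
        Fintype.sum_equiv (Equiv.addRight (n + m - 1)) _ _ (fun x => by
          have hx : (Equiv.addRight (n + m - 1)) x = x + (n + m - 1) := rfl
          rw [hx, show x + (n+m-1) + 1 - (m+n) = x from by ring,
            show x + (n+m-1) = x + n + m - 1 from by ring]),
      show (∑ x : ZMod L, b (x + m - 1) * a (x + n) * 2)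
          = ∑ x : ZMod L, b x * a (x + 1 - (m - n)) * 2 from
        Fintype.sum_equiv (Equiv.addRight (m - 1)) _ _ (fun x => by
          have hx : (Equiv.addRight (m - 1)) x = x + (m - 1) := rfl
          rw [hx, show x + (m-1) + 1 - (m - n) = x + n from by ring,
            show x + (m-1) = x + m - 1 from by ring]),
      ← Finset.sum_mul, ← Finset.sum_mul]
    abel
  -- [Sb n, T m] = 2 T(m-n) - 2 T(m+n)
  have hSbT : ∀ n m : ZMod L,
      (∑ j : ZMod L, b j * b (j+n)) * (∑ j : ZMod L, b j * a (j+1-m))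
        - (∑ j : ZMod L, b j * a (j+1-m)) * (∑ j : ZMod L, b j * b (j+n))
        = (∑ j : ZMod L, b j * a (j+1-(m-n)))*2 - (∑ j : ZMod L, b j * a (j+1-(m+n)))*2 := by
    intro n m
    rw [comm_sum (fun j => b j) (fun j => b (j+n)) (fun k => b k) (fun k => a (k+1-m))]
    simp only [ha, hb, hab, hba]
    simp only [eq_sub_iff_add_eq, ← sub_eq_iff_eq_add]
    simp only [mul_ite, ite_mul, mul_zero, zero_mul]
    simp only [Finset.sum_add_distrib, Finset.sum_sub_distrib, Finset.sum_ite_eq,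
      Finset.mem_univ, if_true, Finset.sum_const_zero, zero_sub, add_zero, zero_add, sub_zero,
      Finset.sum_neg_distrib, neg_neg]
    simp only [show ∀ r s : R, r * 2 * s = (r*s)*2 from fun r s => by noncomm_ring,
      show ∀ r s : R, 2*(r*s) = (r*s)*2 from fun r s => by noncomm_ring]
    simp only [show ∀ (j k : ZMod L), a j * b k = -(b k * a j) from
        fun j k => eq_neg_of_add_eq_zero_left (hab j k), neg_mul, neg_neg,
      Finset.sum_neg_distrib]
    rw [show (∑ x : ZMod L, b x * a (x + n + 1 - m) * 2)
          = ∑ x : ZMod L, b x * a (x + 1 - (m - n)) * 2 from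
        Finset.sum_congr rfl fun x _ => by rw [show x + n + 1 - m = x + 1 - (m - n) from by ring],
      show (∑ x : ZMod L, b (x + n) * a (x + 1 - m) * 2)
          = ∑ x : ZMod L, b x * a (x + 1 - (m + n)) * 2 from
        Fintype.sum_equiv (Equiv.addRight n) _ _ (fun x => by
          have hx : (Equiv.addRight n) x = x + n := rfl
          rw [hx, show x + n + 1 - (m + n) = x + 1 - m from by ring]),
      ← Finset.sum_mul, ← Finset.sum_mul]
    abel
  -- [T n, T m] = 2 (Sa (m-n) - Sb (m-n))
  have hTT : ∀ n m : ZMod L,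
      (∑ j : ZMod L, b j * a (j+1-n)) * (∑ j : ZMod L, b j * a (j+1-m))
        - (∑ j : ZMod L, b j * a (j+1-m)) * (∑ j : ZMod L, b j * a (j+1-n))
        = (∑ j : ZMod L, (a j * a (j+(m-n)) - b j * b (j+(m-n))))*2 := by
    intro n m
    rw [comm_sum (fun j => b j) (fun j => a (j+1-n)) (fun k => b k) (fun k => a (k+1-m))]
    simp only [ha, hb, hab, hba]
    simp only [eq_sub_iff_add_eq, ← sub_eq_iff_eq_add]
    simp only [mul_ite, ite_mul, mul_zero, zero_mul]
    simp only [Finset.sum_add_distrib, Finset.sum_sub_distrib, Finset.sum_ite_eq,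
      Finset.mem_univ, if_true, Finset.sum_const_zero, zero_sub, add_zero, zero_add, sub_zero,
      Finset.sum_neg_distrib, neg_neg]
    simp only [show ∀ r s : R, 2*(r*s) = (r*s)*2 from fun r s => by noncomm_ring]
    rw [show (∑ x : ZMod L, b x * b (x + 1 - n + m - 1) * 2)
          = ∑ x : ZMod L, b x * b (x + (m - n)) * 2 from
        Finset.sum_congr rfl fun x _ => by rw [show x + 1 - n + m - 1 = x + (m - n) from by ring],
      show (∑ x : ZMod L, (a (x + 1 - m) * a (x + 1 - n)) * 2)
          = ∑ x : ZMod L, a x * a (x + (m - n)) * 2 from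
        Fintype.sum_equiv (Equiv.addRight (1 - m)) _ _ (fun x => by
          have hx : (Equiv.addRight (1 - m)) x = x + (1 - m) := rfl
          rw [hx, show x + (1 - m) + (m - n) = x + 1 - n from by ring,
            show x + (1 - m) = x + 1 - m from by ring]),
      sub_mul, ← Finset.sum_mul, ← Finset.sum_mul]
    abel
  -- antisymmetry of the G-sum
  have hanti : ∀ c d : ZMod L, c + d = 0 →
      (∑ j : ZMod L, (a j * a (j+c) - b j * b (j+c)))
        = -(∑ j : ZMod L, (a j * a (j+d) - b j * b (j+d))) := by
    intro c d hcd
    refine eq_neg_of_add_eq_zero_left ?_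
    rw [show (∑ j : ZMod L, (a j * a (j+d) - b j * b (j+d)))
          = ∑ j : ZMod L, (a (j+c) * a j - b (j+c) * b j) from
        (Fintype.sum_equiv (Equiv.addRight c) _ _ (fun x => by
          have hx : (Equiv.addRight c) x = x + c := rfl
          rw [hx, show x + c + d = x from by rw [add_assoc, hcd, add_zero]])).symm]
    rw [← Finset.sum_add_distrib]
    refine Finset.sum_eq_zero fun j _ => ?_
    rw [show a j * a (j+c) - b j * b (j+c) + (a (j+c) * a j - b (j+c) * b j)
          = (a j * a (j+c) + a (j+c) * a j) - (b j * b (j+c) + b (j+c) * b j) from by abel,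
      ha, hb, sub_self]
  -- assembly
  have hcomm4 : ∀ X Y Z W : R, (X - Y) * (Z - W) - (Z - W) * (X - Y)
      = (X*Z - Z*X) - (Y*Z - Z*Y) - (X*W - W*X) + (Y*W - W*Y) := fun X Y Z W => by
    noncomm_ring
  have hcomm2 : ∀ X Y Z : R, (X - Y) * Z - Z * (X - Y)
      = (X*Z - Z*X) - (Y*Z - Z*Y) := fun X Y Z => by noncomm_ring
  intro n m
  refine ⟨?_, ?_, ?_⟩
  · -- [G n, G m] = 0
    rw [hG n, hG m]
    simp only [Finset.sum_sub_distrib]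
    simp only [smul_mul_assoc, mul_smul_comm, smul_smul]
    rw [show ((4:ℂ)⁻¹ * (4:ℂ)⁻¹) • (((∑ j : ZMod L, a j * a (j+n)) - ∑ j : ZMod L, b j * b (j+n))
          * ((∑ j : ZMod L, a j * a (j+m)) - ∑ j : ZMod L, b j * b (j+m)))
        - ((4:ℂ)⁻¹ * (4:ℂ)⁻¹) • (((∑ j : ZMod L, a j * a (j+m)) - ∑ j : ZMod L, b j * b (j+m))
          * ((∑ j : ZMod L, a j * a (j+n)) - ∑ j : ZMod L, b j * b (j+n)))
        = ((4:ℂ)⁻¹ * (4:ℂ)⁻¹) • ((((∑ j : ZMod L, a j * a (j+n)) - ∑ j : ZMod L, b j * b (j+n))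
          * ((∑ j : ZMod L, a j * a (j+m)) - ∑ j : ZMod L, b j * b (j+m)))
        - (((∑ j : ZMod L, a j * a (j+m)) - ∑ j : ZMod L, b j * b (j+m))
          * ((∑ j : ZMod L, a j * a (j+n)) - ∑ j : ZMod L, b j * b (j+n)))) from (smul_sub _ _ _).symm]
    rw [hcomm4, hSaSa n m, hSaSb n m, hSbSa n m, hSbSb n m]
    simp
  · -- [G n, A m] = A (m+n) - A (m-n)
    rw [hG n, hA m, hA (m+n), hA (m-n)]
    simp only [Finset.sum_sub_distrib, smul_mul_assoc, mul_smul_comm, smul_smul]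
    have h : ((∑ x : ZMod L, a x * a (x+n)) - ∑ x : ZMod L, b x * b (x+n))
          * (∑ j : ZMod L, b j * a (j+1-m))
        - (∑ j : ZMod L, b j * a (j+1-m))
          * ((∑ x : ZMod L, a x * a (x+n)) - ∑ x : ZMod L, b x * b (x+n))
        = ((2:ℂ) • (∑ j : ZMod L, b j * a (j+1-(m+n)))
            - (2:ℂ) • (∑ j : ZMod L, b j * a (j+1-(m-n))))
          - ((2:ℂ) • (∑ j : ZMod L, b j * a (j+1-(m-n)))
            - (2:ℂ) • (∑ j : ZMod L, b j * a (j+1-(m+n)))) := by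
      rw [hcomm2, hSaT n m, hSbT n m]; simp only [htwo]
    have h2 : (∑ j : ZMod L, b j * a (j+1-m))
          * ((∑ x : ZMod L, a x * a (x+n)) - ∑ x : ZMod L, b x * b (x+n))
        = ((∑ x : ZMod L, a x * a (x+n)) - ∑ x : ZMod L, b x * b (x+n))
          * (∑ j : ZMod L, b j * a (j+1-m))
        - (((2:ℂ) • (∑ j : ZMod L, b j * a (j+1-(m+n)))
            - (2:ℂ) • (∑ j : ZMod L, b j * a (j+1-(m-n))))
          - ((2:ℂ) • (∑ j : ZMod L, b j * a (j+1-(m-n)))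
            - (2:ℂ) • (∑ j : ZMod L, b j * a (j+1-(m+n))))) := by
      rw [← h]; abel
    rw [h2]
    module
  · -- [A n, A m] = 8 G (n-m)
    rw [hA n, hA m, hG (n-m)]
    simp only [smul_mul_assoc, mul_smul_comm, smul_smul]
    have h := hTT n m
    rw [hanti (m-n) (n-m) (by ring), htwo] at h
    have h2 : (∑ j : ZMod L, b j * a (j+1-m)) * (∑ j : ZMod L, b j * a (j+1-n))
        = (∑ j : ZMod L, b j * a (j+1-n)) * (∑ j : ZMod L, b j * a (j+1-m))
          - (2:ℂ) • (-(∑ j : ZMod L, (a j * a (j+(n-m)) - b j * b (j+(n-m))))) := by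
      rw [← h]; abel
    rw [h2]
    have hI : (Complex.I * Complex.I : ℂ) = -1 := Complex.I_mul_I
    match_scalars <;> ring_nf <;> simp [Complex.I_sq] <;> ring
end

section
/- Let ω = e^{2πi/3} and σ = diag(1, ω, ω²). For L ≥ 2, on (ℂ³)^{⊗L} define the chiral clock operator N = (1/√3) Σ_{j=1}^{L−1} (e^{−iπ/6} σ_j† σ_{j+1} + e^{iπ/6} σ_j σ_{j+1}†) (i.e. the operator N_θ at θ = π/6, with 2cos(π/6) = √3). Then exp((2πi/3)·N) = ω^{L−1} · σ_1 σ_L†. In particular ω raised to the chiral kink-number operator is, up to the phase ω^{L−1}, an operator acting only on the two boundary sites, so any operator commuting with N and with σ_L commutes with σ_1. -/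
/-!
STATEMENT 16: For the chiral clock operator N = (1/√3) Σ_{j=1}^{L−1}
(e^{−iπ/6} σ_j†σ_{j+1} + e^{iπ/6} σ_jσ_{j+1}†) one has exp((2πi/3)N) = ω^{L−1} σ₁σ_L†;
hence any operator commuting with N and with σ_L commutes with σ₁.  Sites are 0-based.
-/

noncomputable section

open Matrix Complex

/-- ω = e^{2πi/3}. -/
def ω : ℂ := Complex.exp (2 * Real.pi * Complex.I / 3)

/-- The 3×3 clock matrix σ = diag(1, ω, ω²). -/
def clockM : Matrix (Fin 3) (Fin 3) ℂ := !![1, 0, 0; 0, ω, 0; 0, 0, ω ^ 2]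

/-- The 3×3 shift matrix τ. -/
def shiftM : Matrix (Fin 3) (Fin 3) ℂ := !![0, 0, 1; 1, 0, 0; 0, 1, 0]

/-- The operator on (ℂ³)^{⊗L} acting as the 3×3 matrix `A` on the j-th tensor factor
and as the identity on all the others (matrix entries of a tensor product). -/
def siteOp3 (L : ℕ) (j : ℕ) (A : Matrix (Fin 3) (Fin 3) ℂ) :
    Matrix (Fin L → Fin 3) (Fin L → Fin 3) ℂ :=
  fun s t => ∏ k : Fin L, if (k : ℕ) = j then A (s k) (t k) else (if s k = t k then 1 else 0)

/-- σ_j on the clock chain (0-based site index). -/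
def clockS (L j : ℕ) : Matrix (Fin L → Fin 3) (Fin L → Fin 3) ℂ := siteOp3 L j clockM

/-- τ_j on the clock chain (0-based site index). -/
def clockT (L j : ℕ) : Matrix (Fin L → Fin 3) (Fin L → Fin 3) ℂ := siteOp3 L j shiftM


lemma ω_ne : ω ≠ 0 := Complex.exp_ne_zero _

lemma ω_cube : ω ^ 3 = 1 := by
  rw [ω, ← Complex.exp_nat_mul]
  rw [show (3:ℕ) * (2 * (Real.pi:ℂ) * Complex.I / 3) = 2 * Real.pi * Complex.I by ring]
  exact Complex.exp_two_pi_mul_I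

lemma ω_sq : ω ^ 2 = ω⁻¹ := by
  have h := ω_cube
  have h2 := ω_ne
  field_simp
  linear_combination h

lemma star_ω : star ω = ω⁻¹ := by
  show (starRingEnd ℂ) ω = ω⁻¹
  rw [ω, ← Complex.exp_conj, ← Complex.exp_neg]
  congr 1
  simp only [map_div₀, _root_.map_mul, Complex.conj_I, Complex.conj_ofReal, map_ofNat]
  ring

lemma star_ω_pow (k : ℕ) : star (ω ^ k) = (ω ^ k)⁻¹ := by
  rw [star_pow, star_ω, inv_pow]

lemma twoCosC (x : ℝ) : Complex.exp ((x:ℂ) * Complex.I) + Complex.exp (-(x:ℂ) * Complex.I)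
    = 2 * Real.cos x := by
  rw [Complex.exp_mul_I, Complex.exp_mul_I, Complex.cos_neg, Complex.sin_neg]
  push_cast [Complex.ofReal_cos]
  ring

lemma sqrt3C_ne : ((Real.sqrt 3 : ℝ) : ℂ) ≠ 0 := by
  norm_cast
  positivity

lemma V0 : Complex.exp (-(Real.pi * Complex.I) / 6) + Complex.exp ((Real.pi * Complex.I) / 6)
    = (Real.sqrt 3 : ℂ) := by
  have h := twoCosC (Real.pi / 6)
  rw [show ((Real.pi/6 : ℝ):ℂ) * Complex.I = (Real.pi * Complex.I)/6 by push_cast; ring] at h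
  rw [show -((Real.pi/6 : ℝ):ℂ) * Complex.I = -(Real.pi * Complex.I)/6 by push_cast; ring] at h
  rw [add_comm] at h
  rw [h, Real.cos_pi_div_six]
  push_cast
  ring

lemma V1 : Complex.exp (-(Real.pi * Complex.I) / 6) * ω + Complex.exp ((Real.pi * Complex.I) / 6) * ω⁻¹
    = 0 := by
  rw [ω, ← Complex.exp_neg, ← Complex.exp_add, ← Complex.exp_add]
  have h := twoCosC (Real.pi / 2)
  rw [show ((Real.pi/2 : ℝ):ℂ) * Complex.I = -(Real.pi * Complex.I)/6 + 2 * Real.pi * Complex.I / 3 by push_cast; ring] at h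
  rw [show -((Real.pi/2 : ℝ):ℂ) * Complex.I = (Real.pi * Complex.I)/6 + -(2 * Real.pi * Complex.I / 3) by push_cast; ring] at h
  rw [h, Real.cos_pi_div_two]
  norm_num

lemma V2 : Complex.exp (-(Real.pi * Complex.I) / 6) * ω⁻¹ + Complex.exp ((Real.pi * Complex.I) / 6) * ω
    = -(Real.sqrt 3 : ℂ) := by
  rw [ω, ← Complex.exp_neg, ← Complex.exp_add, ← Complex.exp_add]
  have h := twoCosC (Real.pi - Real.pi / 6)
  rw [show ((Real.pi - Real.pi/6 : ℝ):ℂ) * Complex.I = (Real.pi * Complex.I)/6 + 2 * Real.pi * Complex.I / 3 by push_cast; ring] at h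
  rw [show -((Real.pi - Real.pi/6 : ℝ):ℂ) * Complex.I = -(Real.pi * Complex.I)/6 + -(2 * Real.pi * Complex.I / 3) by push_cast; ring] at h
  rw [add_comm] at h
  rw [h, Real.cos_pi_sub, Real.cos_pi_div_six]
  push_cast
  ring



lemma ω_exp : Complex.exp (2 * (Real.pi:ℂ) * Complex.I / 3) = ω := rfl

lemma ω_mul_ω : ω * ω = ω⁻¹ := by
  have h := ω_cube; have h2 := ω_ne; field_simp; linear_combination h

lemma ωinv_mul_ωinv : ω⁻¹ * ω⁻¹ = ω := by
  rw [← mul_inv, ω_mul_ω, inv_inv]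

lemma star_ω_inv : star ω⁻¹ = ω := by
  rw [star_inv₀, star_ω, inv_inv]

lemma key (a b : Fin 3) :
    Complex.exp (2 * (Real.pi:ℂ) * Complex.I / 3 *
      ((Real.sqrt 3 : ℂ)⁻¹ *
        (Complex.exp (-(Real.pi * Complex.I) / 6) * (star (ω ^ (a:ℕ)) * ω ^ (b:ℕ)) +
         Complex.exp ((Real.pi * Complex.I) / 6) * (ω ^ (a:ℕ) * star (ω ^ (b:ℕ))))))
    = ω * (ω ^ (a:ℕ) * (ω ^ (b:ℕ))⁻¹) := by
  have hne := ω_ne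
  have hs := sqrt3C_ne
  have e1 : Complex.exp (2 * (Real.pi:ℂ) * Complex.I / 3 * ((Real.sqrt 3 : ℂ)⁻¹ * (Real.sqrt 3 : ℂ))) = ω := by
    rw [inv_mul_cancel₀ hs, mul_one, ω_exp]
  have e0 : Complex.exp (2 * (Real.pi:ℂ) * Complex.I / 3 * ((Real.sqrt 3 : ℂ)⁻¹ * 0)) = 1 := by
    rw [mul_zero, mul_zero, Complex.exp_zero]
  have e2 : Complex.exp (2 * (Real.pi:ℂ) * Complex.I / 3 * ((Real.sqrt 3 : ℂ)⁻¹ * -(Real.sqrt 3 : ℂ))) = ω⁻¹ := by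
    rw [show (Real.sqrt 3 : ℂ)⁻¹ * -(Real.sqrt 3 : ℂ) = -1 by field_simp, mul_neg_one,
      Complex.exp_neg, ω_exp]
  fin_cases a <;> fin_cases b <;>
    simp only [Fin.isValue, Fin.val_zero, Fin.val_one, Fin.val_two, pow_zero, pow_one,
      star_ω_pow, star_ω, star_one, inv_one, mul_one, one_mul, inv_inv, star_ω_inv,
      inv_mul_cancel₀ hne, mul_inv_cancel₀ hne, ω_sq, ω_mul_ω, ωinv_mul_ωinv] <;>
    first
    | (rw [V0, e1])
    | (rw [V1, e0])
    | (rw [V2, e2])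


lemma clockM_eq : clockM = Matrix.diagonal (fun x : Fin 3 => ω ^ (x:ℕ)) := by
  ext x y
  fin_cases x <;> fin_cases y <;>
    simp [clockM, Matrix.diagonal, Matrix.vecHead, Matrix.vecTail]

lemma siteOp3_diagonal (L j : ℕ) (hj : j < L) (v : Fin 3 → ℂ) :
    siteOp3 L j (Matrix.diagonal v) = Matrix.diagonal (fun s : Fin L → Fin 3 => v (s ⟨j, hj⟩)) := by
  ext s t
  by_cases h : s = t
  · subst h
    have hcond : ∀ k : Fin L, ((k : ℕ) = j) = (k = ⟨j, hj⟩) := fun k => by simp [Fin.ext_iff]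
    simp only [siteOp3, Matrix.diagonal_apply_eq, hcond, eq_self_iff_true, if_true]
    rw [Finset.prod_ite_eq' Finset.univ (⟨j, hj⟩ : Fin L) (fun k => v (s k))]
    simp
  · rw [Matrix.diagonal_apply_ne _ h]
    obtain ⟨k0, hk0⟩ : ∃ k, s k ≠ t k := by
      by_contra hc; push_neg at hc; exact h (funext hc)
    apply Finset.prod_eq_zero (Finset.mem_univ k0)
    by_cases hkj : (k0 : ℕ) = j <;> simp [hkj, Matrix.diagonal_apply_ne _ hk0, hk0]

lemma clockS_diag (L j : ℕ) (hj : j < L) :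
    clockS L j = Matrix.diagonal (fun s : Fin L → Fin 3 => ω ^ ((s ⟨j, hj⟩ : ℕ))) := by
  rw [clockS, clockM_eq, siteOp3_diagonal L j hj]

lemma diagonal_sum' {n : Type*} [DecidableEq n] {ι : Type*} (s : Finset ι) (f : ι → n → ℂ) :
    ∑ j ∈ s, Matrix.diagonal (f j) = Matrix.diagonal (fun i => ∑ j ∈ s, f j i) := by
  ext i k
  by_cases h : i = k
  · subst h; simp [Matrix.sum_apply]
  · simp [Matrix.sum_apply, Matrix.diagonal_apply_ne _ h]

lemma tele (f : ℕ → ℂ) (hf : ∀ j, f j ≠ 0) :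
    ∀ n, ∏ j ∈ Finset.range n, (f j * (f (j+1))⁻¹) = f 0 * (f n)⁻¹ := by
  intro n
  induction n with
  | zero => simp [mul_inv_cancel₀ (hf 0)]
  | succ n ih =>
    rw [Finset.prod_range_succ, ih]
    have h1 := hf n
    have h2 := hf (n+1)
    have h0 := hf 0
    field_simp


theorem statement_16 (L : ℕ) (hL : 2 ≤ L)
    (N : Matrix (Fin L → Fin 3) (Fin L → Fin 3) ℂ)
    (hN : N = ((Real.sqrt 3 : ℂ))⁻¹ • ∑ j ∈ Finset.range (L - 1),
      (Complex.exp (-(Real.pi * Complex.I) / 6) • ((clockS L j)ᴴ * clockS L (j + 1))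
        + Complex.exp ((Real.pi * Complex.I) / 6) • (clockS L j * (clockS L (j + 1))ᴴ))) :
    NormedSpace.exp ((2 * (Real.pi : ℂ) * Complex.I / 3) • N)
      = ω ^ (L - 1) • (clockS L 0 * (clockS L (L - 1))ᴴ) ∧
    (∀ W : Matrix (Fin L → Fin 3) (Fin L → Fin 3) ℂ,
      Commute W N → Commute W (clockS L (L - 1)) → Commute W (clockS L 0)) := by
  have hL0 : 0 < L := by omega
  have hL1 : L - 1 < L := by omega
  set c : ℂ := 2 * (Real.pi : ℂ) * Complex.I / 3 with hc
  set idx : ℕ → Fin L := fun j => ⟨j % L, Nat.mod_lt _ hL0⟩ with hidxdef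
  have hidx : ∀ (j : ℕ) (hj : j < L), (⟨j, hj⟩ : Fin L) = idx j := by
    intro j hj; simp [hidxdef, Fin.ext_iff, Nat.mod_eq_of_lt hj]
  have hS : ∀ j, j < L →
      clockS L j = Matrix.diagonal (fun s : Fin L → Fin 3 => ω ^ ((s (idx j) : ℕ))) := by
    intro j hj
    rw [clockS_diag L j hj]
    funext s
    rw [hidx j hj]
  have hterm : ∀ j ∈ Finset.range (L - 1),
      (Complex.exp (-(Real.pi * Complex.I) / 6) • ((clockS L j)ᴴ * clockS L (j + 1))
        + Complex.exp ((Real.pi * Complex.I) / 6) • (clockS L j * (clockS L (j + 1))ᴴ))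
      = Matrix.diagonal (fun s : Fin L → Fin 3 =>
          Complex.exp (-(Real.pi * Complex.I) / 6) *
            (star (ω ^ ((s (idx j) : ℕ))) * ω ^ ((s (idx (j + 1)) : ℕ)))
          + Complex.exp ((Real.pi * Complex.I) / 6) *
            (ω ^ ((s (idx j) : ℕ)) * star (ω ^ ((s (idx (j + 1)) : ℕ))))) := by
    intro j hj
    rw [Finset.mem_range] at hj
    rw [hS j (by omega), hS (j + 1) (by omega)]
    simp only [Matrix.diagonal_conjTranspose, Matrix.diagonal_mul_diagonal,
      ← Matrix.diagonal_smul, ← Matrix.diagonal_add]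
    congr 1 <;> (apply congrArg Matrix.diagonal; funext s; simp [smul_eq_mul, mul_assoc])
  have hNdiag : N = Matrix.diagonal (fun s : Fin L → Fin 3 =>
      (Real.sqrt 3 : ℂ)⁻¹ * ∑ j ∈ Finset.range (L - 1),
        (Complex.exp (-(Real.pi * Complex.I) / 6) *
            (star (ω ^ ((s (idx j) : ℕ))) * ω ^ ((s (idx (j + 1)) : ℕ)))
          + Complex.exp ((Real.pi * Complex.I) / 6) *
            (ω ^ ((s (idx j) : ℕ)) * star (ω ^ ((s (idx (j + 1)) : ℕ)))))) := by
    rw [hN, Finset.sum_congr rfl hterm, diagonal_sum', ← Matrix.diagonal_smul]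
    congr 1
  have hentry : ∀ s : Fin L → Fin 3,
      Complex.exp (c * ((Real.sqrt 3 : ℂ)⁻¹ * ∑ j ∈ Finset.range (L - 1),
        (Complex.exp (-(Real.pi * Complex.I) / 6) *
            (star (ω ^ ((s (idx j) : ℕ))) * ω ^ ((s (idx (j + 1)) : ℕ)))
          + Complex.exp ((Real.pi * Complex.I) / 6) *
            (ω ^ ((s (idx j) : ℕ)) * star (ω ^ ((s (idx (j + 1)) : ℕ)))))))
      = ω ^ (L - 1) * (ω ^ ((s (idx 0) : ℕ)) * star (ω ^ ((s (idx (L - 1)) : ℕ)))) := by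
    intro s
    rw [show c * ((Real.sqrt 3 : ℂ)⁻¹ * ∑ j ∈ Finset.range (L - 1),
        (Complex.exp (-(Real.pi * Complex.I) / 6) *
            (star (ω ^ ((s (idx j) : ℕ))) * ω ^ ((s (idx (j + 1)) : ℕ)))
          + Complex.exp ((Real.pi * Complex.I) / 6) *
            (ω ^ ((s (idx j) : ℕ)) * star (ω ^ ((s (idx (j + 1)) : ℕ))))))
      = ∑ j ∈ Finset.range (L - 1), c * ((Real.sqrt 3 : ℂ)⁻¹ *
        (Complex.exp (-(Real.pi * Complex.I) / 6) *
            (star (ω ^ ((s (idx j) : ℕ))) * ω ^ ((s (idx (j + 1)) : ℕ)))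
          + Complex.exp ((Real.pi * Complex.I) / 6) *
            (ω ^ ((s (idx j) : ℕ)) * star (ω ^ ((s (idx (j + 1)) : ℕ)))))) by
        rw [Finset.mul_sum, Finset.mul_sum]]
    rw [Complex.exp_sum]
    rw [Finset.prod_congr rfl (fun j _ => key (s (idx j)) (s (idx (j + 1))))]
    rw [Finset.prod_mul_distrib, Finset.prod_const, Finset.card_range]
    rw [tele (fun j => ω ^ ((s (idx j) : ℕ))) (fun j => pow_ne_zero _ ω_ne) (L - 1)]
    rw [star_ω_pow]
  have hmain : NormedSpace.exp (c • N)
      = ω ^ (L - 1) • (clockS L 0 * (clockS L (L - 1))ᴴ) := by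
    rw [hNdiag, ← Matrix.diagonal_smul, Matrix.exp_diagonal,
      hS 0 (by omega), hS (L - 1) hL1, Matrix.diagonal_conjTranspose,
      Matrix.diagonal_mul_diagonal, ← Matrix.diagonal_smul]
    apply congrArg Matrix.diagonal
    funext s
    simp only [Pi.coe_exp, Pi.smul_apply, Pi.mul_apply, Pi.star_apply, smul_eq_mul]
    rw [← Complex.exp_eq_exp_ℂ]
    exact hentry s
  refine ⟨hmain, ?_⟩
  intro W hWN hWσ
  have h1 : Commute W (NormedSpace.exp (c • N)) := (hWN.smul_right c).exp_right
  rw [hmain] at h1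
  have hcne : (ω : ℂ) ^ (L - 1) ≠ 0 := pow_ne_zero _ ω_ne
  have h2 : Commute W (clockS L 0 * (clockS L (L - 1))ᴴ) := by
    unfold Commute SemiconjBy at h1 ⊢
    rw [mul_smul_comm, smul_mul_assoc] at h1
    exact smul_right_injective _ hcne h1
  have hinv : (clockS L (L - 1))ᴴ * clockS L (L - 1) = 1 := by
    rw [hS (L - 1) hL1, Matrix.diagonal_conjTranspose, Matrix.diagonal_mul_diagonal,
      ← Matrix.diagonal_one]
    apply congrArg Matrix.diagonal
    funext s
    simp only [Pi.mul_apply, Pi.star_apply, Pi.one_apply]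
    rw [star_ω_pow]
    exact inv_mul_cancel₀ (pow_ne_zero _ ω_ne)
  have h3 : clockS L 0 = (clockS L 0 * (clockS L (L - 1))ᴴ) * clockS L (L - 1) := by
    rw [mul_assoc, hinv, mul_one]
  rw [h3]
  exact h2.mul_right hWσ

end
end
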